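/- Let a, b ∈ (−1,1)∖{0} with |a| ≤ ρcrit and |b| ≤ ρcrit, where ρcrit = 0.63055. Then the edge weight satisfies W(a,b) = J̃(min{|a|,|b|}, a·b). -/

import Mathlib

noncomputable def Jt (a b : ℝ) : ℝ :=
  ((1 / 2) * Real.log ((1 - b ^ 2) / (1 - a ^ 2))) ^ 2 /
    (2 * (b ^ 4 + b ^ 2) / (1 - b ^ 2) ^ 2 + 2 * (a ^ 4 + a ^ 2) / (1 - a ^ 2) ^ 2
      - 4 * b ^ 2 * (a ^ 2 + 1) / ((1 - b ^ 2) * (1 - a ^ 2)))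


lemma log_upper {t : ℝ} (ht : 1 ≤ t) : Real.log t ≤ (t - 1/t) / 2 := by
  have key : MonotoneOn (fun s : ℝ => (s - 1/s) / 2 - Real.log s) (Set.Ici 1) := by
    have hd : ∀ x ∈ Set.Ioi (0:ℝ),
        HasDerivAt (fun s : ℝ => (s - 1/s) / 2 - Real.log s)
          ((1 - (-(x^2)⁻¹)) / 2 - x⁻¹) x := by
      intro x hx
      have hx0 : x ≠ 0 := ne_of_gt hx
      have h1 : HasDerivAt (fun s : ℝ => (s - 1/s) / 2) ((1 - (-(x^2)⁻¹)) / 2) x := by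
        have := ((hasDerivAt_id x).sub (hasDerivAt_inv hx0)).div_const 2
        simpa [one_div] using this
      exact h1.sub (Real.hasDerivAt_log hx0)
    apply monotoneOn_of_deriv_nonneg (convex_Ici 1)
    · intro x hx
      have hx0 : (0:ℝ) < x := lt_of_lt_of_le one_pos hx
      exact ((hd x hx0).continuousAt).continuousWithinAt
    · intro x hx
      rw [interior_Ici] at hx
      have hx0 : (0:ℝ) < x := lt_trans one_pos hx
      exact ((hd x hx0).differentiableAt).differentiableWithinAt
    · intro x hx
      rw [interior_Ici] at hx
      have hx0 : (0:ℝ) < x := lt_trans one_pos hx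
      rw [(hd x hx0).deriv]
      have : (1 - (-(x^2)⁻¹)) / 2 - x⁻¹ = (x-1)^2 / (2*x^2) := by
        field_simp
        ring
      rw [this]
      positivity
  have h0 : (fun s : ℝ => (s - 1/s) / 2 - Real.log s) 1 ≤
      (fun s : ℝ => (s - 1/s) / 2 - Real.log s) t :=
    key (Set.self_mem_Ici) ht ht
  simp [Real.log_one] at h0
  rw [one_div]
  linarith

lemma log_lower {t : ℝ} (ht : 1 ≤ t) : 2*(t-1)/(t+1) ≤ Real.log t := by
  have key : MonotoneOn (fun s : ℝ => Real.log s - 2*(s-1)/(s+1)) (Set.Ici 1) := by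
    have hd : ∀ x ∈ Set.Ioi (0:ℝ),
        HasDerivAt (fun s : ℝ => Real.log s - 2*(s-1)/(s+1))
          (x⁻¹ - (2*(x+1) - 2*(x-1)*1)/(x+1)^2) x := by
      intro x hx
      have hx0 : x ≠ 0 := ne_of_gt hx
      have hx1 : x + 1 ≠ 0 := by have := Set.mem_Ioi.mp hx; linarith
      have h2 : HasDerivAt (fun s : ℝ => 2*(s-1)/(s+1))
          ((2*(x+1) - 2*(x-1)*1)/(x+1)^2) x := by
        have ha : HasDerivAt (fun s : ℝ => 2*(s-1)) 2 x := by
          simpa using ((hasDerivAt_id x).sub_const 1).const_mul 2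
        have hb : HasDerivAt (fun s : ℝ => s+1) 1 x := (hasDerivAt_id x).add_const 1
        have := ha.div hb hx1
        exact this
      exact (Real.hasDerivAt_log hx0).sub h2
    apply monotoneOn_of_deriv_nonneg (convex_Ici 1)
    · intro x hx
      have hx0 : (0:ℝ) < x := lt_of_lt_of_le one_pos hx
      exact ((hd x hx0).continuousAt).continuousWithinAt
    · intro x hx
      rw [interior_Ici] at hx
      have hx0 : (0:ℝ) < x := lt_trans one_pos hx
      exact ((hd x hx0).differentiableAt).differentiableWithinAt
    · intro x hx
      rw [interior_Ici] at hx
      have hx0 : (0:ℝ) < x := lt_trans one_pos hx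
      rw [(hd x hx0).deriv]
      have : x⁻¹ - (2*(x+1) - 2*(x-1)*1)/(x+1)^2 = (x-1)^2/(x*(x+1)^2) := by
        field_simp
        ring
      rw [this]
      positivity
  have h0 : (fun s : ℝ => Real.log s - 2*(s-1)/(s+1)) 1 ≤
      (fun s : ℝ => Real.log s - 2*(s-1)/(s+1)) t :=
    key (Set.self_mem_Ici) ht ht
  simp [Real.log_one] at h0
  linarith



lemma regA {q d1 d2 : ℝ} (hq : 1 ≤ q) (h1 : 0 < d1) (h12 : d1 ≤ d2) (h2 : d2 ≤ 0.59) :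
    (Real.log (1+d1/q))^2/(d1*(2*d1+1)) ≤ (Real.log (1+d2/q))^2/(d2*(2*d2+1)) := by
  have hq0 : (0:ℝ) < q := lt_of_lt_of_le one_pos hq
  have hder : ∀ x : ℝ, 0 < x →
      HasDerivAt (fun d : ℝ => (Real.log (1+d/q))^2/(d*(2*d+1)))
        ((((2:ℕ) * (Real.log (1+x/q))^(2-1) * ((1/q)/(1+x/q))) * (x*(2*x+1))
          - (Real.log (1+x/q))^2 * (1*(2*x+1)+x*2)) / (x*(2*x+1))^2) x := by
    intro x hx
    have harg : (0:ℝ) < 1 + x/q := by positivity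
    have hg : HasDerivAt (fun d : ℝ => 1 + d/q) (1/q) x := by
      simpa using ((hasDerivAt_id x).div_const q).const_add 1
    have hlog : HasDerivAt (fun d : ℝ => Real.log (1+d/q)) ((1/q)/(1+x/q)) x :=
      hg.log (ne_of_gt harg)
    have hc : HasDerivAt (fun d : ℝ => (Real.log (1+d/q))^2)
        ((2:ℕ) * (Real.log (1+x/q))^(2-1) * ((1/q)/(1+x/q))) x := hlog.pow 2
    have hD : HasDerivAt (fun d : ℝ => d*(2*d+1)) (1*(2*x+1)+x*2) x := by
      have h := (hasDerivAt_id x).mul (((hasDerivAt_id x).const_mul 2).add_const 1)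
      simp only [id_eq] at h
      convert h using 1 <;> first | rfl | ring
    have hDne : x*(2*x+1) ≠ 0 := ne_of_gt (by positivity)
    exact hc.div hD hDne
  have hmono : MonotoneOn (fun d : ℝ => (Real.log (1+d/q))^2/(d*(2*d+1)))
      (Set.Icc d1 d2) := by
    apply monotoneOn_of_deriv_nonneg (convex_Icc d1 d2)
    · intro x hx
      exact ((hder x (lt_of_lt_of_le h1 hx.1)).continuousAt).continuousWithinAt
    · intro x hx
      rw [interior_Icc] at hx
      exact ((hder x (lt_trans h1 hx.1)).differentiableAt).differentiableWithinAt
    · intro x hx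
      rw [interior_Icc] at hx
      have hx0 : 0 < x := lt_trans h1 hx.1
      have hx59 : x ≤ 0.59 := le_of_lt (lt_of_lt_of_le hx.2 h2)
      rw [(hder x hx0).deriv]
      set L := Real.log (1+x/q) with hL
      have harg : (0:ℝ) < 1 + x/q := by positivity
      have ht1 : (1:ℝ) ≤ 1 + x/q := le_add_of_nonneg_right (by positivity)
      have hL0 : 0 ≤ L := Real.log_nonneg ht1
      have hqx : (0:ℝ) < q + x := by linarith
      have hkey : L * (2*q*(q+x)) ≤ x*(2*q+x) := by
        have hb := log_upper ht1
        have heq : ((1+x/q) - 1/(1+x/q))/2 = x*(2*q+x)/(2*q*(q+x)) := by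
          field_simp
          ring
        rw [heq] at hb
        rw [← le_div_iff₀ (by positivity)]
        exact hb
      have hpoly : (2*q+x)*(4*x+1) ≤ 4*q*(2*x+1) := by nlinarith [sq_nonneg x, hx0.le]
      have hnum : L^2 * (1*(2*x+1)+x*2) * (q+x) ≤ 2 * L * (x*(2*x+1)) := by
        nlinarith [mul_le_mul_of_nonneg_left hkey (mul_nonneg hL0 (by linarith : (0:ℝ) ≤ 4*x+1)),
          mul_le_mul_of_nonneg_left hpoly (mul_nonneg hL0 hx0.le), sq_nonneg L, hq0, hx0]
      have hrw : ((2:ℕ) * L^(2-1) * ((1/q)/(1+x/q))) * (x*(2*x+1)) - L^2 * (1*(2*x+1)+x*2)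
          = (2 * L * (x*(2*x+1)) - L^2 * (1*(2*x+1)+x*2) * (q+x)) / (q+x) := by
        have h1q : (1/q)/(1+x/q) = 1/(q+x) := by
          field_simp
        rw [h1q]
        field_simp
        ring
      rw [hrw]
      apply div_nonneg (div_nonneg (by linarith) hqx.le) (by positivity)
  exact hmono (Set.left_mem_Icc.mpr h12) (Set.right_mem_Icc.mpr h12) h12



lemma regB {q d1 d2 : ℝ} (hq : 1 < q) (h1 : 0 < d1) (h2 : 0.59 ≤ d2)
    (hsum : q + d2 ≤ 1.6601) (hprod : d1 * d2 = q*(q-1)) :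
    (Real.log (1+d1/q))^2/(d1*(2*d1+1)) ≤ (Real.log (1+d2/q))^2/(d2*(2*d2+1)) := by
  have hq0 : (0:ℝ) < q := lt_trans one_pos hq
  have hqmax : q ≤ 1.0701 := by linarith
  have hd2max : d2 ≤ 0.6601 := by linarith
  have hd20 : (0:ℝ) < d2 := by linarith
  have hd1max : d1 ≤ 0.1272 := by nlinarith [mul_le_mul_of_nonneg_left h2 h1.le]
  -- upper bound for LHS
  have harg1 : (0:ℝ) < 1 + d1/q := by positivity
  have hL1le : Real.log (1+d1/q) ≤ d1 := by
    have := Real.log_le_sub_one_of_pos harg1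
    have hdq : d1/q ≤ d1 := div_le_self h1.le hq.le
    linarith
  have hL10 : 0 ≤ Real.log (1+d1/q) :=
    Real.log_nonneg (le_add_of_nonneg_right (by positivity))
  have hden1 : (0:ℝ) < d1*(2*d1+1) := by positivity
  have hLHS : (Real.log (1+d1/q))^2/(d1*(2*d1+1)) ≤ 0.1015 := by
    rw [div_le_iff₀ hden1]
    nlinarith [pow_le_pow_left₀ hL10 hL1le 2]
  -- lower bound for RHS
  have ht1 : (1:ℝ) ≤ 1 + d2/q := le_add_of_nonneg_right (by positivity)
  have hL2 : (0.4213:ℝ) ≤ Real.log (1+d2/q) := by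
    have hlb := log_lower ht1
    have heq : 2*((1+d2/q)-1)/((1+d2/q)+1) = 2*d2/(2*q+d2) := by
      field_simp
      ring
    rw [heq] at hlb
    have : (0.4213:ℝ) ≤ 2*d2/(2*q+d2) := by
      rw [le_div_iff₀ (by linarith)]
      nlinarith
    linarith
  have hden2 : (0:ℝ) < d2*(2*d2+1) := by positivity
  have hRHS : (0.1015:ℝ) ≤ (Real.log (1+d2/q))^2/(d2*(2*d2+1)) := by
    rw [le_div_iff₀ hden2]
    nlinarith [sq_nonneg (Real.log (1+d2/q) - 0.4213)]
  linarith

lemma div_identity (L D : ℝ) : ((1/2)*L)^2/(2*D) = L^2/D/8 := by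
  rw [div_div]
  ring

lemma Jt_repr {s c : ℝ} (hs1 : s^2 < 1) (hc0 : 0 ≤ c^2) (hcs : c^2 < s^2) :
    Jt s c = (Real.log (1 + (1/(1-s^2) - 1/(1-c^2))/(1/(1-c^2))))^2 /
      ((1/(1-s^2) - 1/(1-c^2)) * (2*(1/(1-s^2) - 1/(1-c^2)) + 1)) / 8 := by
  have h1s : (0:ℝ) < 1 - s^2 := by linarith
  have h1c : (0:ℝ) < 1 - c^2 := by linarith
  have hd0 : 0 < 1/(1-s^2) - 1/(1-c^2) := by
    rw [sub_pos]
    exact one_div_lt_one_div_of_lt h1s (by linarith)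
  have harg : (1 - c^2)/(1 - s^2) = 1 + (1/(1-s^2) - 1/(1-c^2))/(1/(1-c^2)) := by
    field_simp
    ring
  have hden : 2 * (c^4 + c^2) / (1 - c^2) ^ 2 + 2 * (s^4 + s^2) / (1 - s^2) ^ 2
      - 4 * c^2 * (s^2 + 1) / ((1 - c^2) * (1 - s^2))
      = 2 * ((1/(1-s^2) - 1/(1-c^2)) * (2*(1/(1-s^2) - 1/(1-c^2)) + 1)) := by
    field_simp
    ring
  rw [Jt, harg, hden]
  exact div_identity _ _

lemma core {x y : ℝ} (hx : 0 < x) (hxy : x ≤ y) (hy : y ≤ 0.63055) :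
    Jt x (x*y) ≤ Jt y (x*y) := by
  have hy0 : (0:ℝ) < y := lt_of_lt_of_le hx hxy
  have hw : y^2 ≤ 0.3975933025 := by nlinarith
  have hw1 : y^2 < 1 := by nlinarith
  have hu1 : x^2 < 1 := by nlinarith
  have hvu : (x*y)^2 < x^2 := by nlinarith
  have hvw : (x*y)^2 < y^2 := by nlinarith
  have hv0 : (0:ℝ) < (x*y)^2 := by positivity
  rw [Jt_repr hu1 (by positivity) hvu, Jt_repr hw1 (by positivity) hvw]
  set q := 1/(1-(x*y)^2) with hqdef
  set d1 := 1/(1-x^2) - q with hd1def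
  set d2 := 1/(1-y^2) - q with hd2def
  have h1v : (0:ℝ) < 1 - (x*y)^2 := by nlinarith
  have hq1 : 1 < q := by
    rw [hqdef, lt_div_iff₀ h1v]
    nlinarith
  have hd10 : 0 < d1 := by
    rw [hd1def, sub_pos, hqdef]
    exact one_div_lt_one_div_of_lt (by linarith) (by linarith)
  have hd12 : d1 ≤ d2 := by
    rw [hd1def, hd2def]
    have : 1/(1-x^2) ≤ 1/(1-y^2) :=
      one_div_le_one_div_of_le (by linarith) (by nlinarith)
    linarith
  have hsum : q + d2 ≤ 1.6601 := by
    rw [hd2def, hqdef]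
    have : q + (1/(1-y^2) - q) = 1/(1-y^2) := by ring
    have h2 : 1/(1-y^2) ≤ (1.6601:ℝ) := by
      rw [div_le_iff₀ (by linarith)]
      nlinarith
    rw [hqdef] at this
    linarith [this, h2]
  have hprod : d1 * d2 = q*(q-1) := by
    rw [hd1def, hd2def, hqdef]
    have hx2 : (1:ℝ) - x^2 ≠ 0 := by linarith
    have hy2 : (1:ℝ) - y^2 ≠ 0 := by linarith
    have hv2 : (1:ℝ) - (x*y)^2 ≠ 0 := by linarith
    have hv2' : (1:ℝ) - x^2*y^2 ≠ 0 := by rw [← mul_pow]; exact hv2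
    field_simp
    ring
  have hq0 : (0:ℝ) < q := lt_trans one_pos hq1
  have key : (Real.log (1+d1/q))^2/(d1*(2*d1+1)) ≤ (Real.log (1+d2/q))^2/(d2*(2*d2+1)) := by
    rcases le_or_gt d2 0.59 with h | h
    · exact regA hq1.le hd10 hd12 h
    · exact regB hq1 hd10 h.le hsum hprod
  linarith [key]


lemma Jt_abs (a c : ℝ) : Jt a c = Jt |a| |c| := by
  have h2 : ∀ z : ℝ, |z|^2 = z^2 := fun z => sq_abs z
  have h4 : ∀ z : ℝ, |z|^4 = z^4 := fun z => by
    rw [pow_abs, abs_of_nonneg (by positivity)]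
  simp only [Jt, h2, h4]

noncomputable def W (a b : ℝ) : ℝ := min (Jt a (a * b)) (Jt b (a * b))

/-- If |a|, |b| ≤ ρcrit = 0.63055, the edge weight satisfies
W(a,b) = J̃(min{|a|,|b|}, a·b). -/
theorem W_eq_Jt_min (a b : ℝ) (ha : a ∈ Set.Ioo (-1 : ℝ) 1) (hb : b ∈ Set.Ioo (-1 : ℝ) 1)
    (ha0 : a ≠ 0) (hb0 : b ≠ 0) (hac : |a| ≤ 0.63055) (hbc : |b| ≤ 0.63055) :
    W a b = Jt (min |a| |b|) (a * b) := by
  have hA : 0 < |a| := abs_pos.mpr ha0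
  have hB : 0 < |b| := abs_pos.mpr hb0
  have hJa : Jt a (a*b) = Jt |a| (|a| * |b|) := by rw [Jt_abs a (a*b), abs_mul]
  have hJb : Jt b (a*b) = Jt |b| (|a| * |b|) := by rw [Jt_abs b (a*b), abs_mul]
  rcases le_total |a| |b| with h | h
  · rw [min_eq_left h]
    have hR : Jt |a| (a*b) = Jt |a| (|a| * |b|) := by
      rw [Jt_abs |a| (a*b), abs_abs, abs_mul]
    rw [W, hJa, hJb, hR]
    exact min_eq_left (core hA h hbc)
  · rw [min_eq_right h]
    have hR : Jt |b| (a*b) = Jt |b| (|a| * |b|) := by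
      rw [Jt_abs |b| (a*b), abs_abs, abs_mul]
    have hcore := core hB h hac
    rw [mul_comm |b| |a|] at hcore
    rw [W, hJa, hJb, hR]
    exact min_eq_right hcore
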